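/- Bounded deadbeat steering under uniform controllability (construction in the proof of Lemma 5.2): Let Υ > 0 with ‖A_j‖ ≤ Υ and ‖B_j‖ ≤ Υ for all j, and suppose for some stage k and integer t_k ≥ 1 with k + t_k ≤ N the controllability matrix satisfies Ξ_{k,t_k}Ξ_{k,t_k}ᵀ ⪰ λ_C I with λ_C > 0. Set Ψ = Σ_{i=1}^{t_k} Υ^i. Then for every p̄ ∈ ℝ^{n_x} there exist controls q_k,…,q_{k+t_k−1} ∈ ℝ^{n_u} such that the states defined by p_k = p̄ and p_{j+1} = A_jp_j + B_jq_j for j = k,…,k+t_k−1 satisfy: p_{k+t_k} = 0; ( Σ_{j=k}^{k+t_k−1} ‖q_j‖² )^{1/2} ≤ (ΨΥ^{t_k}/λ_C)‖p̄‖; and ‖p_j‖ ≤ ( Υ^{j−k} + Ψ²Υ^{t_k}/λ_C )‖p̄‖ for all j = k,…,k+t_k−1. -/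

import Mathlib

set_option maxHeartbeats 1000000

open Matrix BigOperators Finset
open scoped Matrix.Norms.L2Operator

/-- The spectral (operator) norm of a real matrix. -/
noncomputable def opNorm {m n : Type*} [Fintype m] [Fintype n] [DecidableEq n]
    (A : Matrix m n ℝ) : ℝ :=
  ‖LinearMap.toContinuousLinearMap (Matrix.toEuclideanLin A)‖

/-- The Euclidean norm of a vector in `ℝ^n`. -/
noncomputable def evNorm {n : ℕ} (x : Fin n → ℝ) : ℝ :=
  ‖(EuclideanSpace.equiv (Fin n) ℝ).symm x‖

/-- Ordered product of matrices: `prodE E i len = E (i+len-1) * ⋯ * E (i+1) * E i`. -/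
def prodE {n : ℕ} (E : ℕ → Matrix (Fin n) (Fin n) ℝ) : ℕ → ℕ → Matrix (Fin n) (Fin n) ℝ
  | _, 0 => 1
  | i, (len + 1) => E (i + len) * prodE E i len

/-- The controllability matrix `Ξ_{k,j}`. -/
noncomputable def ctrb {nx nu : ℕ} (A : ℕ → Matrix (Fin nx) (Fin nx) ℝ)
    (B : ℕ → Matrix (Fin nx) (Fin nu) ℝ) (k j : ℕ) :
    Matrix (Fin nx) (Fin j × Fin nu) ℝ :=
  Matrix.of fun r mc =>
    (prodE A (k + j - (mc.1 : ℕ)) (mc.1 : ℕ) * B (k + j - 1 - (mc.1 : ℕ))) r mc.2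

/- ### auxiliary lemmas -/

lemma opNorm_eq' {m n : Type*} [Fintype m] [Fintype n] [DecidableEq n] (A : Matrix m n ℝ) :
    opNorm A = ‖A‖ := (Matrix.l2_opNorm_def A).symm

lemma opNorm_nonneg' {m n : Type*} [Fintype m] [Fintype n] [DecidableEq n] (A : Matrix m n ℝ) :
    0 ≤ opNorm A := by rw [opNorm_eq']; exact norm_nonneg _

lemma opNorm_transpose' {m n : Type*} [Fintype m] [Fintype n] [DecidableEq m] [DecidableEq n]
    (A : Matrix m n ℝ) : opNorm Aᵀ = opNorm A := by
  rw [opNorm_eq', opNorm_eq', ← Matrix.l2_opNorm_conjTranspose A]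
  congr 1

lemma opNorm_mul' {l m n : Type*} [Fintype l] [Fintype m] [Fintype n] [DecidableEq m]
    [DecidableEq n] (A : Matrix l m ℝ) (B : Matrix m n ℝ) :
    opNorm (A * B) ≤ opNorm A * opNorm B := by
  rw [opNorm_eq', opNorm_eq', opNorm_eq']; exact Matrix.l2_opNorm_mul A B

lemma opNorm_one' {n : ℕ} : opNorm (1 : Matrix (Fin n) (Fin n) ℝ) ≤ 1 := by
  unfold opNorm
  apply ContinuousLinearMap.opNorm_le_bound _ zero_le_one
  intro x
  simp [Matrix.toEuclideanLin_apply]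

lemma evNorm_mulVec' {m n : ℕ} (A : Matrix (Fin m) (Fin n) ℝ) (x : Fin n → ℝ) :
    evNorm (A *ᵥ x) ≤ opNorm A * evNorm x := by
  rw [opNorm_eq']
  exact Matrix.l2_opNorm_mulVec A ((EuclideanSpace.equiv (Fin n) ℝ).symm x)

lemma evNorm_sq' {n : ℕ} (x : Fin n → ℝ) : evNorm x ^ 2 = ∑ i, x i ^ 2 := by
  rw [evNorm, EuclideanSpace.norm_eq, Real.sq_sqrt (by positivity)]
  simp [sq_abs]

lemma evNorm_nonneg' {n : ℕ} (x : Fin n → ℝ) : 0 ≤ evNorm x := norm_nonneg _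

lemma evNorm_dot' {n : ℕ} (x : Fin n → ℝ) : x ⬝ᵥ x = evNorm x ^ 2 := by
  rw [evNorm_sq']; simp [dotProduct, sq]

lemma dot_le' {n : ℕ} (x y : Fin n → ℝ) : x ⬝ᵥ y ≤ evNorm x * evNorm y := by
  have h := abs_real_inner_le_norm ((EuclideanSpace.equiv (Fin n) ℝ).symm x)
    ((EuclideanSpace.equiv (Fin n) ℝ).symm y)
  have h2 : (inner ℝ ((EuclideanSpace.equiv (Fin n) ℝ).symm x)
      ((EuclideanSpace.equiv (Fin n) ℝ).symm y) : ℝ) = x ⬝ᵥ y := by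
    simp [PiLp.inner_apply, dotProduct, mul_comm]
  rw [h2] at h
  exact (le_abs_self _).trans h

lemma evNorm_add_le' {n : ℕ} (x y : Fin n → ℝ) : evNorm (x + y) ≤ evNorm x + evNorm y := by
  unfold evNorm; rw [map_add]; exact norm_add_le _ _

lemma evNorm_neg' {n : ℕ} (x : Fin n → ℝ) : evNorm (-x) = evNorm x := by
  unfold evNorm; rw [map_neg, norm_neg]

lemma evNorm_sum_le' {n : ℕ} {ι : Type*} (s : Finset ι) (v : ι → Fin n → ℝ) :
    evNorm (∑ i ∈ s, v i) ≤ ∑ i ∈ s, evNorm (v i) := by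
  unfold evNorm; rw [map_sum]; exact norm_sum_le _ _

lemma dot_self_pos {n : ℕ} {x : Fin n → ℝ} (hx : x ≠ 0) : 0 < x ⬝ᵥ x := by
  obtain ⟨i, hi⟩ := Function.ne_iff.mp hx
  rw [show x ⬝ᵥ x = ∑ i, x i ^ 2 by simp [dotProduct, sq]]
  exact Finset.sum_pos' (fun j _ => sq_nonneg _) ⟨i, Finset.mem_univ i, sq_pos_of_ne_zero hi⟩

lemma opNorm_prodE {n : ℕ} (A : ℕ → Matrix (Fin n) (Fin n) ℝ) {Υ : ℝ} (hΥ : 0 ≤ Υ) (N : ℕ)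
    (hA : ∀ j < N, opNorm (A j) ≤ Υ) :
    ∀ len i, i + len ≤ N → opNorm (prodE A i len) ≤ Υ ^ len := by
  intro len
  induction len with
  | zero => intro i _; simpa [prodE] using opNorm_one' (n := n)
  | succ len ih =>
    intro i hi
    have h1 : opNorm (prodE A i (len + 1)) ≤ opNorm (A (i + len)) * opNorm (prodE A i len) :=
      opNorm_mul' _ _
    calc opNorm (prodE A i (len + 1)) ≤ opNorm (A (i + len)) * opNorm (prodE A i len) := h1
      _ ≤ Υ * Υ ^ len := by
          apply mul_le_mul (hA _ (by omega)) (ih i (by omega)) (opNorm_nonneg' _)  hΥ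
      _ = Υ ^ (len + 1) := by ring


lemma reflect_sum {M : Type*} [AddCommMonoid M] (tk : ℕ) (g : Fin tk → M) (T : ℕ → M)
    (hT : ∀ m (h : m < tk), T m = g ⟨tk - 1 - m, by omega⟩) :
    ∑ m ∈ Finset.range tk, T m = ∑ c : Fin tk, g c := by
  rw [← Finset.sum_range_reflect (fun m => T m) tk]
  rw [← Fin.sum_univ_eq_sum_range (fun j => T (tk - 1 - j)) tk]
  apply Finset.sum_congr rfl
  intro i _
  have h2 := i.2
  rw [hT (tk - 1 - (i : ℕ)) (by omega)]
  have h3 : (⟨tk - 1 - (tk - 1 - (i : ℕ)), by omega⟩ : Fin tk) = i := by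
    apply Fin.ext
    show tk - 1 - (tk - 1 - (i : ℕ)) = (i : ℕ)
    omega
  rw [h3]

/-- **Bounded deadbeat steering under uniform controllability (construction in the proof
of Lemma 5.2).**  If `‖A_j‖, ‖B_j‖ ≤ Υ` and `Ξ_{k,t_k}Ξ_{k,t_k}ᵀ ⪰ λ_C I`, then any
initial state `p̄` at stage `k` can be steered to `0` at stage `k + t_k` by controls of
total Euclidean norm at most `(ΨΥ^{t_k}/λ_C)‖p̄‖`, with intermediate states bounded by
`(Υ^{j−k} + Ψ²Υ^{t_k}/λ_C)‖p̄‖`, where `Ψ = Σ_{i=1}^{t_k}Υ^i`. -/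
theorem bounded_deadbeat_steering
    (N nx nu : ℕ) (hN : 1 ≤ N) (hnx : 1 ≤ nx) (hnu : 1 ≤ nu)
    (A : ℕ → Matrix (Fin nx) (Fin nx) ℝ) (B : ℕ → Matrix (Fin nx) (Fin nu) ℝ)
    (Υ lamC : ℝ) (hΥ : 0 < Υ) (hlamC : 0 < lamC)
    (hA : ∀ j < N, opNorm (A j) ≤ Υ) (hB : ∀ j < N, opNorm (B j) ≤ Υ)
    (k tk : ℕ) (htk : 1 ≤ tk) (hktk : k + tk ≤ N)
    (hctrb : (ctrb A B k tk * (ctrb A B k tk)ᵀ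
      - lamC • (1 : Matrix (Fin nx) (Fin nx) ℝ)).PosSemidef)
    (Ψ : ℝ) (hΨ : Ψ = ∑ i ∈ Icc 1 tk, Υ ^ i) :
    ∀ pbar : Fin nx → ℝ,
      ∃ (q : ℕ → Fin nu → ℝ) (p : ℕ → Fin nx → ℝ),
        p k = pbar ∧
        (∀ j, k ≤ j → j < k + tk → p (j + 1) = A j *ᵥ p j + B j *ᵥ q j) ∧
        p (k + tk) = 0 ∧
        Real.sqrt (∑ j ∈ Ico k (k + tk), evNorm (q j) ^ 2)
          ≤ (Ψ * Υ ^ tk / lamC) * evNorm pbar ∧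
        (∀ j, k ≤ j → j < k + tk →
          evNorm (p j) ≤ (Υ ^ (j - k) + Ψ ^ 2 * Υ ^ tk / lamC) * evNorm pbar) := by
  intro pbar
  set Ξ : Matrix (Fin nx) (Fin tk × Fin nu) ℝ := ctrb A B k tk with hΞ
  set Φ : Matrix (Fin nx) (Fin nx) ℝ := prodE A k tk with hΦdef
  set G : Matrix (Fin nx) (Fin nx) ℝ := Ξ * Ξᵀ with hGdef
  -- coercivity of G
  have hG : ∀ x : Fin nx → ℝ, lamC * (x ⬝ᵥ x) ≤ x ⬝ᵥ (G *ᵥ x) := by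
    intro x
    have := hctrb.dotProduct_mulVec_nonneg x
    simp only [star_trivial, Matrix.sub_mulVec, dotProduct_sub, Matrix.smul_mulVec,
      Matrix.one_mulVec, dotProduct_smul, smul_eq_mul, sub_nonneg] at this
    linarith
  -- G is positive definite, hence invertible
  have hGherm : G.IsHermitian := by
    have h1 : Ξᵀ = Ξᴴ := by ext i j; simp [Matrix.conjTranspose_apply]
    rw [hGdef, h1]
    exact Matrix.isHermitian_mul_conjTranspose_self Ξ
  have hGpd : G.PosDef := by
    refine Matrix.PosDef.of_dotProduct_mulVec_pos hGherm fun x hx => ?_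
    have h1 := hG x
    have h2 : 0 < lamC * (x ⬝ᵥ x) := mul_pos hlamC (dot_self_pos hx)
    simpa using lt_of_lt_of_le h2 h1
  have hGdet : IsUnit G.det := hGpd.isUnit.map (Matrix.detMonoidHom)
  set w : Fin nx → ℝ := G⁻¹ *ᵥ (-(Φ *ᵥ pbar)) with hwdef
  have hGw : G *ᵥ w = -(Φ *ᵥ pbar) := by
    rw [hwdef, Matrix.mulVec_mulVec, Matrix.mul_nonsing_inv _ hGdet, Matrix.one_mulVec]
  set qvec : Fin tk × Fin nu → ℝ := Ξᵀ *ᵥ w with hqvec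
  -- the blocks of the controllability matrix
  set blk : Fin tk → Matrix (Fin nx) (Fin nu) ℝ :=
    fun c => prodE A (k + tk - (c : ℕ)) (c : ℕ) * B (k + tk - 1 - (c : ℕ)) with hblk
  have hΞblk : ∀ (r : Fin nx) (c : Fin tk) (u : Fin nu), Ξ r (c, u) = blk c r u := by
    intro r c u; rfl
  set qcol : Fin tk → Fin nu → ℝ := fun c u => qvec (c, u) with hqcol
  have hqcol_eq : ∀ c : Fin tk, qcol c = (blk c)ᵀ *ᵥ w := by
    intro c
    funext u
    simp only [hqcol, hqvec, Matrix.mulVec, dotProduct, Matrix.transpose_apply]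
    exact Finset.sum_congr rfl fun r _ => by rw [hΞblk]
  -- the controls
  set q : ℕ → Fin nu → ℝ := fun j u =>
    if h : k ≤ j ∧ j < k + tk then qvec (⟨k + tk - 1 - j, by omega⟩, u) else 0 with hqdef
  have hq_eq : ∀ c : Fin tk, q (k + tk - 1 - (c : ℕ)) = qcol c := by
    intro c
    funext u
    have hc : (c : ℕ) < tk := c.2
    have h1 : k ≤ k + tk - 1 - (c : ℕ) ∧ k + tk - 1 - (c : ℕ) < k + tk := by omega
    simp only [hqdef, dif_pos h1, hqcol]
    congr 1
    ext
    · simp; omega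
    · rfl
  -- the states
  set f : ℕ → Fin nx → ℝ := fun i =>
    Nat.rec pbar (fun i fi => A (k + i) *ᵥ fi + B (k + i) *ᵥ q (k + i)) i with hfdef
  have hf0 : f 0 = pbar := rfl
  have hfs : ∀ i, f (i + 1) = A (k + i) *ᵥ f i + B (k + i) *ᵥ q (k + i) := fun i => rfl
  set p : ℕ → Fin nx → ℝ := fun j => f (j - k) with hpdef
  -- closed form for the states
  have hfi : ∀ i, f i = prodE A k i *ᵥ pbar
      + ∑ m ∈ range i, prodE A (k + m + 1) (i - 1 - m) *ᵥ (B (k + m) *ᵥ q (k + m)) := by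
    intro i
    induction i with
    | zero => simp [hf0, prodE, Matrix.one_mulVec]
    | succ i ih =>
      have hsum : A (k + i) *ᵥ (∑ m ∈ range i,
          prodE A (k + m + 1) (i - 1 - m) *ᵥ (B (k + m) *ᵥ q (k + m)))
          = ∑ m ∈ range i, (A (k + i) * prodE A (k + m + 1) (i - 1 - m)) *ᵥ
              (B (k + m) *ᵥ q (k + m)) := by
        rw [← Matrix.mulVecLin_apply, map_sum]
        exact Finset.sum_congr rfl fun m _ => by
          rw [Matrix.mulVecLin_apply, Matrix.mulVec_mulVec]
      have hsum2 : ∑ m ∈ range i, (A (k + i) * prodE A (k + m + 1) (i - 1 - m)) *ᵥ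
              (B (k + m) *ᵥ q (k + m))
          = ∑ m ∈ range i, prodE A (k + m + 1) (i + 1 - 1 - m) *ᵥ
              (B (k + m) *ᵥ q (k + m)) := by
        apply Finset.sum_congr rfl
        intro m hm
        have hm' : m < i := Finset.mem_range.mp hm
        have h2 : A (k + i) * prodE A (k + m + 1) (i - 1 - m)
            = prodE A (k + m + 1) (i + 1 - 1 - m) := by
          have h3 : i + 1 - 1 - m = (i - 1 - m) + 1 := by omega
          rw [h3]
          show _ = A (k + m + 1 + (i - 1 - m)) * prodE A (k + m + 1) (i - 1 - m)
          have h5 : k + m + 1 + (i - 1 - m) = k + i := by omega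
          rw [h5]
        rw [h2]
      have h1 : A (k + i) * prodE A k i = prodE A k (i + 1) := rfl
      have hlast : prodE A (k + i + 1) (i + 1 - 1 - i) *ᵥ (B (k + i) *ᵥ q (k + i))
          = B (k + i) *ᵥ q (k + i) := by
        have h4 : i + 1 - 1 - i = 0 := by omega
        rw [h4]
        show (1 : Matrix (Fin nx) (Fin nx) ℝ) *ᵥ _ = _
        rw [Matrix.one_mulVec]
      rw [hfs i, ih, Matrix.mulVec_add, hsum, hsum2, Matrix.mulVec_mulVec, h1,
        Finset.sum_range_succ, hlast, add_assoc]
  -- Ξ *ᵥ qvec as a sum of blocks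
  have hΞq : Ξ *ᵥ qvec = ∑ c : Fin tk, blk c *ᵥ qcol c := by
    funext r
    rw [Finset.sum_apply]
    calc (Ξ *ᵥ qvec) r = ∑ mc : Fin tk × Fin nu, Ξ r mc * qvec mc := by
          simp [Matrix.mulVec, dotProduct]
      _ = ∑ c : Fin tk, ∑ u : Fin nu, Ξ r (c, u) * qvec (c, u) := Fintype.sum_prod_type _
      _ = ∑ c : Fin tk, (blk c *ᵥ qcol c) r := by
          apply Finset.sum_congr rfl
          intro c _
          simp only [Matrix.mulVec, dotProduct]
          exact Finset.sum_congr rfl fun u _ => by rw [hΞblk, hqcol]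
  -- the steering identity
  have hterm : ∑ m ∈ range tk, prodE A (k + m + 1) (tk - 1 - m) *ᵥ (B (k + m) *ᵥ q (k + m))
      = Ξ *ᵥ qvec := by
    rw [hΞq]
    apply reflect_sum tk (fun c => blk c *ᵥ qcol c)
    intro m hm
    have hc : tk - 1 - m < tk := by omega
    show prodE A (k + m + 1) (tk - 1 - m) *ᵥ (B (k + m) *ᵥ q (k + m))
        = blk ⟨tk - 1 - m, by omega⟩ *ᵥ qcol ⟨tk - 1 - m, by omega⟩
    have e1 : k + tk - (tk - 1 - m) = k + m + 1 := by omega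
    have e2 : k + tk - 1 - (tk - 1 - m) = k + m := by omega
    have e3 : qcol ⟨tk - 1 - m, by omega⟩ = q (k + m) := by
      rw [← hq_eq ⟨tk - 1 - m, by omega⟩]
      show q (k + tk - 1 - (tk - 1 - m)) = q (k + m)
      rw [show k + tk - 1 - (tk - 1 - m) = k + m from by omega]
    have e4 : blk ⟨tk - 1 - m, by omega⟩
        = prodE A (k + m + 1) (tk - 1 - m) * B (k + m) := by
      rw [hblk]
      simp only []
      rw [e1, e2]
    rw [e3, e4, Matrix.mulVec_mulVec]
  have hΞqval : Ξ *ᵥ qvec = -(Φ *ᵥ pbar) := by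
    calc Ξ *ᵥ qvec = (Ξ * Ξᵀ) *ᵥ w := Matrix.mulVec_mulVec w Ξ Ξᵀ
      _ = G *ᵥ w := by rw [← hGdef]
      _ = -(Φ *ᵥ pbar) := hGw
  have hftk : f tk = 0 := by
    rw [hfi tk, hterm, hΞqval, ← hΦdef]
    simp
  -- norm estimates
  have hΥ0 : (0:ℝ) ≤ Υ := le_of_lt hΥ
  have hΨ0 : 0 ≤ Ψ := by
    rw [hΨ]
    exact Finset.sum_nonneg fun i _ => pow_nonneg hΥ.le _
  have hΦn : opNorm Φ ≤ Υ ^ tk := opNorm_prodE A hΥ0 N hA tk k hktk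
  have hblkn : ∀ c : Fin tk, opNorm (blk c) ≤ Υ ^ ((c : ℕ) + 1) := by
    intro c
    have hc : (c : ℕ) < tk := c.2
    calc opNorm (blk c)
        ≤ opNorm (prodE A (k + tk - (c : ℕ)) (c : ℕ)) * opNorm (B (k + tk - 1 - (c : ℕ))) :=
          opNorm_mul' _ _
      _ ≤ Υ ^ (c : ℕ) * Υ :=
          mul_le_mul (opNorm_prodE A hΥ0 N hA (c : ℕ) (k + tk - (c : ℕ)) (by omega))
            (hB _ (by omega)) (opNorm_nonneg' _) (pow_nonneg hΥ0 _)
      _ = Υ ^ ((c : ℕ) + 1) := by ring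
  have hw_norm : lamC * evNorm w ≤ evNorm (Φ *ᵥ pbar) := by
    have h1 : lamC * (w ⬝ᵥ w) ≤ w ⬝ᵥ (G *ᵥ w) := hG w
    rw [hGw] at h1
    have h2 : w ⬝ᵥ (-(Φ *ᵥ pbar)) ≤ evNorm w * evNorm (Φ *ᵥ pbar) := by
      have h3 := dot_le' w (-(Φ *ᵥ pbar))
      rwa [evNorm_neg'] at h3
    rw [evNorm_dot'] at h1
    rcases eq_or_lt_of_le (evNorm_nonneg' w) with h0 | h0
    · rw [← h0, mul_zero]; exact evNorm_nonneg' _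
    · nlinarith [h1.trans h2]
  have hqcoln : ∀ c : Fin tk, evNorm (qcol c) ≤ Υ ^ ((c : ℕ) + 1) * evNorm w := by
    intro c
    rw [hqcol_eq c]
    calc evNorm ((blk c)ᵀ *ᵥ w) ≤ opNorm (blk c)ᵀ * evNorm w := evNorm_mulVec' _ _
      _ = opNorm (blk c) * evNorm w := by rw [opNorm_transpose']
      _ ≤ Υ ^ ((c : ℕ) + 1) * evNorm w :=
          mul_le_mul_of_nonneg_right (hblkn c) (evNorm_nonneg' w)
  set Q : ℝ := ∑ j ∈ Ico k (k + tk), evNorm (q j) ^ 2 with hQdef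
  have hQ0 : 0 ≤ Q := Finset.sum_nonneg fun j _ => sq_nonneg _
  have hQ : Q = ∑ c : Fin tk, evNorm (qcol c) ^ 2 := by
    rw [hQdef, Finset.sum_Ico_eq_sum_range]
    rw [show k + tk - k = tk by omega]
    apply reflect_sum tk (fun c => evNorm (qcol c) ^ 2)
    intro m hm
    show evNorm (q (k + m)) ^ 2 = evNorm (qcol ⟨tk - 1 - m, by omega⟩) ^ 2
    have e3 : qcol ⟨tk - 1 - m, by omega⟩ = q (k + m) := by
      rw [← hq_eq ⟨tk - 1 - m, by omega⟩]
      show q (k + tk - 1 - (tk - 1 - m)) = q (k + m)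
      rw [show k + tk - 1 - (tk - 1 - m) = k + m from by omega]
    rw [e3]
  have hΨsum : ∑ c : Fin tk, Υ ^ ((c : ℕ) + 1) = Ψ := by
    rw [hΨ, ← Finset.Ico_add_one_right_eq_Icc, Finset.sum_Ico_eq_sum_range,
      show tk + 1 - 1 = tk by omega,
      Fin.sum_univ_eq_sum_range (fun m => Υ ^ (m + 1)) tk]
    exact Finset.sum_congr rfl fun m _ => by rw [add_comm 1 m]
  have hQle : Real.sqrt Q ≤ Ψ * evNorm w := by
    have h1 : Q ≤ ∑ c : Fin tk, (Υ ^ ((c : ℕ) + 1) * evNorm w) ^ 2 := by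
      rw [hQ]
      exact Finset.sum_le_sum fun c _ =>
        pow_le_pow_left₀ (evNorm_nonneg' _) (hqcoln c) 2
    have h2 : ∑ c : Fin tk, (Υ ^ ((c : ℕ) + 1) * evNorm w) ^ 2
        ≤ (∑ c : Fin tk, Υ ^ ((c : ℕ) + 1) * evNorm w) ^ 2 :=
      Finset.sum_sq_le_sq_sum_of_nonneg fun c _ =>
        mul_nonneg (pow_nonneg hΥ.le _) (evNorm_nonneg' _)
    have h3 : ∑ c : Fin tk, Υ ^ ((c : ℕ) + 1) * evNorm w = Ψ * evNorm w := by
      rw [← Finset.sum_mul, hΨsum]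
    have h4 : Q ≤ (Ψ * evNorm w) ^ 2 := by
      rw [← h3]; exact h1.trans h2
    calc Real.sqrt Q ≤ Real.sqrt ((Ψ * evNorm w) ^ 2) := Real.sqrt_le_sqrt h4
      _ = Ψ * evNorm w := Real.sqrt_sq (mul_nonneg hΨ0 (evNorm_nonneg' _))
  have hwb : evNorm w ≤ Υ ^ tk * evNorm pbar / lamC := by
    rw [le_div_iff₀ hlamC]
    calc evNorm w * lamC = lamC * evNorm w := by ring
      _ ≤ evNorm (Φ *ᵥ pbar) := hw_norm
      _ ≤ opNorm Φ * evNorm pbar := evNorm_mulVec' _ _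
      _ ≤ Υ ^ tk * evNorm pbar :=
          mul_le_mul_of_nonneg_right hΦn (evNorm_nonneg' _)
  have hkey : Real.sqrt Q ≤ (Ψ * Υ ^ tk / lamC) * evNorm pbar := by
    calc Real.sqrt Q ≤ Ψ * evNorm w := hQle
      _ ≤ Ψ * (Υ ^ tk * evNorm pbar / lamC) := mul_le_mul_of_nonneg_left hwb hΨ0
      _ = (Ψ * Υ ^ tk / lamC) * evNorm pbar := by ring
  have hqj : ∀ m, m < tk → evNorm (q (k + m)) ≤ Real.sqrt Q := by
    intro m hm
    have h1 : evNorm (q (k + m)) ^ 2 ≤ Q := by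
      rw [hQdef]
      exact Finset.single_le_sum (f := fun j => evNorm (q j) ^ 2)
        (fun j _ => sq_nonneg _) (Finset.mem_Ico.mpr ⟨by omega, by omega⟩)
    calc evNorm (q (k + m)) = Real.sqrt (evNorm (q (k + m)) ^ 2) :=
          (Real.sqrt_sq (evNorm_nonneg' _)).symm
      _ ≤ Real.sqrt Q := Real.sqrt_le_sqrt h1
  -- assemble
  refine ⟨q, p, ?_, ?_, ?_, hkey, ?_⟩
  · show f (k - k) = pbar
    rw [Nat.sub_self, hf0]
  · intro j hj1 hj2
    show f (j + 1 - k) = A j *ᵥ f (j - k) + B j *ᵥ q j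
    rw [show j + 1 - k = (j - k) + 1 by omega, hfs]
    rw [show k + (j - k) = j by omega]
  · show f (k + tk - k) = 0
    rw [show k + tk - k = tk by omega, hftk]
  · intro j hj1 hj2
    show evNorm (f (j - k)) ≤ (Υ ^ (j - k) + Ψ ^ 2 * Υ ^ tk / lamC) * evNorm pbar
    set i := j - k with hi
    have hitk : i < tk := by omega
    have hb1 : evNorm (prodE A k i *ᵥ pbar) ≤ Υ ^ i * evNorm pbar :=
      (evNorm_mulVec' _ _).trans
        (mul_le_mul_of_nonneg_right (opNorm_prodE A hΥ0 N hA i k (by omega))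
          (evNorm_nonneg' _))
    have hb2 : ∀ m ∈ range i,
        evNorm (prodE A (k + m + 1) (i - 1 - m) *ᵥ (B (k + m) *ᵥ q (k + m)))
          ≤ Υ ^ (i - m) * Real.sqrt Q := by
      intro m hm
      have hm' : m < i := Finset.mem_range.mp hm
      calc evNorm (prodE A (k + m + 1) (i - 1 - m) *ᵥ (B (k + m) *ᵥ q (k + m)))
          ≤ opNorm (prodE A (k + m + 1) (i - 1 - m)) * evNorm (B (k + m) *ᵥ q (k + m)) :=
            evNorm_mulVec' _ _
        _ ≤ Υ ^ (i - 1 - m) * (Υ * evNorm (q (k + m))) := by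
            apply mul_le_mul (opNorm_prodE A hΥ0 N hA (i - 1 - m) (k + m + 1) (by omega))
              ((evNorm_mulVec' _ _).trans
                (mul_le_mul_of_nonneg_right (hB _ (by omega)) (evNorm_nonneg' _)))
              (evNorm_nonneg' _) (pow_nonneg hΥ0 _)
        _ ≤ Υ ^ (i - 1 - m) * (Υ * Real.sqrt Q) := by
            apply mul_le_mul_of_nonneg_left _ (pow_nonneg hΥ0 _)
            exact mul_le_mul_of_nonneg_left (hqj m (by omega)) hΥ0
        _ = Υ ^ ((i - 1 - m) + 1) * Real.sqrt Q := by ring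
        _ = Υ ^ (i - m) * Real.sqrt Q := by rw [show (i - 1 - m) + 1 = i - m by omega]
    have hgeo : ∑ m ∈ range i, Υ ^ (i - m) ≤ Ψ := by
      have h5 : ∑ m ∈ range i, Υ ^ (i - m) = ∑ m ∈ range i, Υ ^ (m + 1) := by
        rw [← Finset.sum_range_reflect (fun m => Υ ^ (m + 1)) i]
        apply Finset.sum_congr rfl
        intro m hm
        have hm' := Finset.mem_range.mp hm
        show Υ ^ (i - m) = Υ ^ (i - 1 - m + 1)
        rw [show i - 1 - m + 1 = i - m from by omega]
      rw [h5, hΨ]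
      have h7 : ∑ m ∈ range i, Υ ^ (m + 1) = ∑ s ∈ Icc 1 i, Υ ^ s := by
        rw [← Finset.Ico_add_one_right_eq_Icc, Finset.sum_Ico_eq_sum_range,
          show i + 1 - 1 = i by omega]
        exact Finset.sum_congr rfl fun m _ => by rw [add_comm 1 m]
      rw [h7]
      apply Finset.sum_le_sum_of_subset_of_nonneg
      · intro s hs
        simp only [Finset.mem_Icc] at hs ⊢
        omega
      · intro s _ _
        exact pow_nonneg hΥ0 _
    calc evNorm (f i)
        ≤ evNorm (prodE A k i *ᵥ pbar)
          + evNorm (∑ m ∈ range i,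
              prodE A (k + m + 1) (i - 1 - m) *ᵥ (B (k + m) *ᵥ q (k + m))) := by
          rw [hfi i]; exact evNorm_add_le' _ _
      _ ≤ Υ ^ i * evNorm pbar + ∑ m ∈ range i, Υ ^ (i - m) * Real.sqrt Q := by
          apply add_le_add hb1
          exact (evNorm_sum_le' _ _).trans (Finset.sum_le_sum hb2)
      _ = Υ ^ i * evNorm pbar + (∑ m ∈ range i, Υ ^ (i - m)) * Real.sqrt Q := by
          rw [Finset.sum_mul]
      _ ≤ Υ ^ i * evNorm pbar + Ψ * Real.sqrt Q := by
          apply add_le_add_right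
          exact mul_le_mul_of_nonneg_right hgeo (Real.sqrt_nonneg _)
      _ ≤ Υ ^ i * evNorm pbar + Ψ * ((Ψ * Υ ^ tk / lamC) * evNorm pbar) := by
          apply add_le_add_right
          exact mul_le_mul_of_nonneg_left hkey hΨ0
      _ = (Υ ^ i + Ψ ^ 2 * Υ ^ tk / lamC) * evNorm pbar := by ring
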